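/- Every finite simple graph G with m edges has arboricity at most √(2m); that is, the edge set of G can be partitioned into at most ⌊√(2m)⌋ forests. -/

import Mathlib

open SimpleGraph

/-- The first edge of a non-nil walk is among its edges. -/
lemma first_edge_mem {V : Type*} {H : SimpleGraph V} {v w : V} (p : H.Walk v w)
    (hp : ¬ p.Nil) : s(v, p.getVert 1) ∈ p.edges := by
  cases p with
  | nil => simp at hp
  | cons h q => simp [SimpleGraph.Walk.getVert_cons_succ]

/-- A cycle passing through `v` uses two distinct edges at `v`. -/
lemma cycle_two_edges {V : Type*} {H : SimpleGraph V} {v : V} {c : H.Walk v v}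
    (hc : c.IsCycle) :
    ∃ u x : V, u ≠ x ∧ s(v, u) ∈ c.edges ∧ s(v, x) ∈ c.edges ∧
      H.Adj v u ∧ H.Adj v x := by
  have hnil : ¬ c.Nil := hc.not_nil
  have hnil' : ¬ c.reverse.Nil := by
    rw [SimpleGraph.Walk.nil_iff_length_eq, SimpleGraph.Walk.length_reverse]
    have := hc.three_le_length
    omega
  set u := c.getVert 1 with hu
  set x := c.reverse.getVert 1 with hx
  have hadju : H.Adj v u := c.adj_snd hnil
  have hadjx : H.Adj v x := c.reverse.adj_snd hnil'
  have h1 : s(v, u) ∈ c.edges := first_edge_mem c hnil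
  have h2' : s(v, x) ∈ c.reverse.edges := first_edge_mem c.reverse hnil'
  have h2 : s(v, x) ∈ c.edges := by
    rwa [SimpleGraph.Walk.edges_reverse, List.mem_reverse] at h2'
  refine ⟨u, x, ?_, h1, h2, hadju, hadjx⟩
  -- distinctness: first edge vs last edge of a trail of length ≥ 3
  intro huxeq
  have hE : c.edges = s(v, u) :: c.tail.edges := by
    conv_lhs => rw [← c.cons_tail_eq hnil]
    rw [SimpleGraph.Walk.edges_cons]
  have hnodup : c.edges.Nodup := hc.isTrail.edges_nodup
  have hnotmem : s(v, u) ∉ c.tail.edges := by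
    rw [hE] at hnodup
    exact (List.nodup_cons.mp hnodup).1
  have htne : c.tail.edges ≠ [] := by
    have hlen1 : c.tail.edges.length = c.tail.length := SimpleGraph.Walk.length_edges _
    have hlen2 : c.tail.length + 1 = c.length := SimpleGraph.Walk.length_tail_add_one hnil
    have hlen3 := hc.three_le_length
    intro hcon
    rw [hcon] at hlen1
    simp at hlen1
    omega
  have hrev : c.edges.reverse = s(v, x) :: c.reverse.tail.edges := by
    rw [← SimpleGraph.Walk.edges_reverse]
    conv_lhs => rw [← c.reverse.cons_tail_eq hnil']
    rw [SimpleGraph.Walk.edges_cons]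
  rw [← huxeq] at hrev
  have hrev2 : c.edges.reverse = c.tail.edges.reverse ++ [s(v, u)] := by
    rw [hE]
    simp
  obtain ⟨b, l', hb⟩ := List.exists_cons_of_ne_nil
    (show c.tail.edges.reverse ≠ [] by simpa using htne)
  rw [hrev, hb] at hrev2
  simp only [List.cons_append, List.cons.injEq] at hrev2
  apply hnotmem
  rw [← List.mem_reverse, hb, hrev2.1]
  exact List.mem_cons_self

/-- If all edges of `S` through `v` coincide (at most one of them), and the graph
on the edges of `S` avoiding `v` is acyclic, then the graph on `S` is acyclic. -/
lemma acyclic_pendant {V : Type*} [DecidableEq V] (S : Set (Sym2 V)) (v : V)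
    (hone : ∀ e₁ ∈ S, ∀ e₂ ∈ S, v ∈ e₁ → v ∈ e₂ → e₁ = e₂)
    (hA : (SimpleGraph.fromEdgeSet {e | e ∈ S ∧ v ∉ e}).IsAcyclic) :
    (SimpleGraph.fromEdgeSet S).IsAcyclic := by
  intro w c hc
  by_cases hv : v ∈ c.support
  · obtain ⟨u, x, hux, h1, h2, hadju, hadjx⟩ := cycle_two_edges (hc.rotate hv)
    have hS1 : s(v, u) ∈ S := ((SimpleGraph.fromEdgeSet_adj _).mp hadju).1
    have hS2 : s(v, x) ∈ S := ((SimpleGraph.fromEdgeSet_adj _).mp hadjx).1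
    exact hux (Sym2.congr_right.mp
      (hone _ hS1 _ hS2 (Sym2.mem_mk_left _ _) (Sym2.mem_mk_left _ _)))
  · have hedges : ∀ e ∈ c.edges,
        e ∈ (SimpleGraph.fromEdgeSet {e | e ∈ S ∧ v ∉ e}).edgeSet := by
      intro e he
      have heS : e ∈ (SimpleGraph.fromEdgeSet S).edgeSet :=
        c.edges_subset_edgeSet he
      rw [SimpleGraph.edgeSet_fromEdgeSet] at heS ⊢
      refine ⟨⟨heS.1, ?_⟩, heS.2⟩
      intro hve
      induction e with
      | _ a b =>
        rcases Sym2.mem_iff.mp hve with rfl | rfl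
        · exact hv (c.fst_mem_support_of_mem_edges he)
        · exact hv (c.snd_mem_support_of_mem_edges he)
    exact hA (c.transfer _ hedges) (hc.transfer hedges)

/-- Main induction: if `2m ≤ k(k+2)` then the edges can be `k`-colored with
acyclic color classes. -/
lemma arboricity_key {V : Type*} [Fintype V] [DecidableEq V] (k : ℕ) (hk : 1 ≤ k) :
    ∀ n (G : SimpleGraph V), G.edgeSet.ncard ≤ n → 2 * G.edgeSet.ncard ≤ k * (k + 2) →
    ∃ f : Sym2 V → Fin k, ∀ i : Fin k,
      (SimpleGraph.fromEdgeSet {e | e ∈ G.edgeSet ∧ f e = i}).IsAcyclic := by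
  have empty_case : ∀ (G : SimpleGraph V), G.edgeSet = ∅ →
      ∃ f : Sym2 V → Fin k, ∀ i : Fin k,
        (SimpleGraph.fromEdgeSet {e | e ∈ G.edgeSet ∧ f e = i}).IsAcyclic := by
    intro G hG
    refine ⟨fun _ => ⟨0, hk⟩, fun i => ?_⟩
    have : {e | e ∈ G.edgeSet ∧ (fun _ => (⟨0, hk⟩ : Fin k)) e = i} = (∅ : Set (Sym2 V)) := by
      rw [hG]; simp
    rw [this, SimpleGraph.fromEdgeSet_empty]
    intro v p hp
    exact hp.ne_bot rfl
  intro n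
  induction n with
  | zero =>
    intro G hcard _
    exact empty_case G (Set.ncard_eq_zero (Set.toFinite _) |>.mp (Nat.le_zero.mp hcard))
  | succ n ih =>
    intro G hcard hbound
    by_cases hempty : G.edgeSet = ∅
    · exact empty_case G hempty
    classical
    letI : DecidableRel G.Adj := Classical.decRel _
    -- find a vertex of positive degree of minimum degree
    obtain ⟨e₀, he₀⟩ := Set.nonempty_iff_ne_empty.mpr hempty
    set W : Finset V := Finset.univ.filter (fun w => 0 < G.degree w) with hW
    have hWne : W.Nonempty := by
      induction e₀ with
      | _ a b =>
        rw [SimpleGraph.mem_edgeSet] at he₀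
        refine ⟨a, ?_⟩
        simp only [hW, Finset.mem_filter, Finset.mem_univ, true_and]
        exact (SimpleGraph.degree_pos_iff_exists_adj _ _).mpr ⟨b, he₀⟩
    obtain ⟨v, hvW, hmin⟩ := W.exists_min_image (fun w => G.degree w) hWne
    have hdegpos : 0 < G.degree v := (Finset.mem_filter.mp hvW).2
    have hm_eq : G.edgeFinset.card = G.edgeSet.ncard :=
      (Set.ncard_eq_toFinset_card' _).symm
    -- min degree is at most k
    have hdegk : G.degree v ≤ k := by
      by_contra hcon
      push_neg at hcon
      have hsub : G.neighborFinset v ⊆ W.erase v := by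
        intro u hu
        rw [SimpleGraph.mem_neighborFinset] at hu
        refine Finset.mem_erase.mpr ⟨hu.ne', ?_⟩
        simp only [hW, Finset.mem_filter, Finset.mem_univ, true_and]
        exact (SimpleGraph.degree_pos_iff_exists_adj _ _).mpr ⟨v, hu.symm⟩
      have h1 : G.degree v ≤ (W.erase v).card := by
        rw [← SimpleGraph.card_neighborFinset_eq_degree]
        exact Finset.card_le_card hsub
      have h2 : (W.erase v).card < W.card := Finset.card_erase_lt_of_mem hvW
      have h3 : W.card * G.degree v ≤ ∑ w ∈ W, G.degree w := by
        calc W.card * G.degree v = ∑ _w ∈ W, G.degree v := by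
              rw [Finset.sum_const, smul_eq_mul]
          _ ≤ ∑ w ∈ W, G.degree w := Finset.sum_le_sum (fun w hw => hmin w hw)
      have h4 : ∑ w ∈ W, G.degree w ≤ ∑ w, G.degree w :=
        Finset.sum_le_sum_of_subset (Finset.subset_univ W)
      have h5 : ∑ w, G.degree w = 2 * G.edgeSet.ncard := by
        rw [SimpleGraph.sum_degrees_eq_twice_card_edges, hm_eq]
      nlinarith [hcon, h1, h2, h3, h4, h5, hbound]
    -- delete the vertex's edges and recurse
    set G' := G.deleteEdges (G.incidenceSet v) with hG'
    have hG'edge : G'.edgeSet = G.edgeSet \ G.incidenceSet v :=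
      SimpleGraph.edgeSet_deleteEdges _
    obtain ⟨u₀, hu₀⟩ := (SimpleGraph.degree_pos_iff_exists_adj _ _).mp hdegpos
    have hss : G'.edgeSet ⊂ G.edgeSet := by
      rw [hG'edge]
      refine ⟨Set.diff_subset, fun hsup => ?_⟩
      have : s(v, u₀) ∈ G.edgeSet \ G.incidenceSet v :=
        hsup ((SimpleGraph.mem_edgeSet _).mpr hu₀)
      exact this.2 ⟨(SimpleGraph.mem_edgeSet _).mpr hu₀, Sym2.mem_mk_left _ _⟩
    have hlt : G'.edgeSet.ncard < G.edgeSet.ncard :=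
      Set.ncard_lt_ncard hss (Set.toFinite _)
    obtain ⟨f', hf'⟩ := ih G' (by omega) (by omega)
    -- injective coloring of edges at v
    obtain ⟨emb⟩ : Nonempty (G.neighborSet v ↪ Fin k) :=
      Function.Embedding.nonempty_of_card_le
        (by rw [SimpleGraph.card_neighborSet_eq_degree, Fintype.card_fin]; exact hdegk)
    set g : V → Fin k := fun u =>
      if h : u ∈ G.neighborSet v then emb ⟨u, h⟩ else ⟨0, hk⟩ with hg
    set f : Sym2 V → Fin k := fun e =>
      if h : v ∈ e then g (Sym2.Mem.other h) else f' e with hf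
    have hP2 : ∀ e : Sym2 V, v ∉ e → f e = f' e := by
      intro e he
      simp only [hf, dif_neg he]
    have hP1 : ∀ (u : V) (hu : u ∈ G.neighborSet v), f s(v, u) = emb ⟨u, hu⟩ := by
      intro u hu
      have hv' : v ∈ s(v, u) := Sym2.mem_mk_left _ _
      simp only [hf, dif_pos hv']
      have hoth : Sym2.Mem.other hv' = u := Sym2.congr_right.mp (Sym2.other_spec hv')
      rw [hoth]
      simp only [hg, dif_pos hu]
    refine ⟨f, fun i => ?_⟩
    apply acyclic_pendant _ v
    · -- at most one edge of color i at v
      rintro e₁ ⟨he₁G, he₁i⟩ e₂ ⟨he₂G, he₂i⟩ hv₁ hv₂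
      have hs₁ : s(v, Sym2.Mem.other hv₁) = e₁ := Sym2.other_spec hv₁
      have hs₂ : s(v, Sym2.Mem.other hv₂) = e₂ := Sym2.other_spec hv₂
      have hn₁ : Sym2.Mem.other hv₁ ∈ G.neighborSet v := by
        rw [SimpleGraph.mem_neighborSet]
        exact (SimpleGraph.mem_edgeSet _).mp (by rw [hs₁]; exact he₁G)
      have hn₂ : Sym2.Mem.other hv₂ ∈ G.neighborSet v := by
        rw [SimpleGraph.mem_neighborSet]
        exact (SimpleGraph.mem_edgeSet _).mp (by rw [hs₂]; exact he₂G)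
      have h1 := hP1 _ hn₁
      have h2 := hP1 _ hn₂
      rw [hs₁] at h1
      rw [hs₂] at h2
      have hinj := emb.injective (show emb ⟨Sym2.Mem.other hv₁, hn₁⟩
          = emb ⟨Sym2.Mem.other hv₂, hn₂⟩ by rw [← h1, ← h2, he₁i, he₂i])
      have ho : Sym2.Mem.other hv₁ = Sym2.Mem.other hv₂ := congrArg Subtype.val hinj
      rw [← hs₁, ← hs₂, ho]
    · -- edges of color i avoiding v form the color class of G', which is acyclic
      have hset : {e | e ∈ ({e | e ∈ G.edgeSet ∧ f e = i} : Set (Sym2 V)) ∧ v ∉ e}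
          = {e | e ∈ G'.edgeSet ∧ f' e = i} := by
        ext e
        simp only [Set.mem_setOf_eq, hG'edge, Set.mem_diff]
        constructor
        · rintro ⟨⟨heG, hfi⟩, hv⟩
          exact ⟨⟨heG, fun hinc => hv hinc.2⟩, by rw [← hP2 e hv]; exact hfi⟩
        · rintro ⟨⟨heG, hinc⟩, hfi⟩
          have hv : v ∉ e := fun hve => hinc ⟨heG, hve⟩
          exact ⟨⟨heG, by rw [hP2 e hv]; exact hfi⟩, hv⟩
      rw [hset]
      exact hf' i

/-- `G` has arboricity at most `α`: its edge set can be partitioned into at most `α` forests. -/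
def HasArboricityLE {V : Type*} (G : SimpleGraph V) (α : ℕ) : Prop :=
  ∃ f : Sym2 V → Fin α,
    ∀ i : Fin α, (SimpleGraph.fromEdgeSet {e | e ∈ G.edgeSet ∧ f e = i}).IsAcyclic

/-- Every graph with `m ≥ 1` edges has arboricity at most `⌊√(2m)⌋`. -/
theorem arboricity_le_sqrt {V : Type*} [Fintype V] [DecidableEq V]
    (G : SimpleGraph V) [DecidableRel G.Adj] (hm : 1 ≤ G.edgeFinset.card) :
    HasArboricityLE G (Nat.sqrt (2 * G.edgeFinset.card)) := by
  set m := G.edgeFinset.card with hmdef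
  set k := Nat.sqrt (2 * m) with hkdef
  have hk : 1 ≤ k := by
    rw [hkdef]
    exact Nat.sqrt_pos.mpr (by omega)
  have hncard : G.edgeSet.ncard = m := by
    rw [hmdef, Set.ncard_eq_toFinset_card']
    congr 1
  have hbound : 2 * G.edgeSet.ncard ≤ k * (k + 2) := by
    rw [hncard]
    have := Nat.lt_succ_sqrt (2 * m)
    rw [← hkdef] at this
    nlinarith
  obtain ⟨f, hf⟩ := arboricity_key k hk G.edgeSet.ncard G le_rfl hbound
  exact ⟨f, hf⟩
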